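/- Let M be a symmetric real n × n matrix, K a symmetric positive semidefinite real n × n matrix, ε ∈ ℝ, d ≥ 0 a real scalar, s ∈ ℝⁿ, and G : ℝⁿ → ℝ differentiable. Let φ : ℝ → ℝⁿ be differentiable and μ : ℝ → ℝⁿ satisfy, for all t: (i) M φ'(t) = s − d K μ(t); (ii) M μ(t) = ∇G(φ(t)) + ε² K φ(t). Then the discrete energy H(t) = G(φ(t)) + (ε²/2) ⟨φ(t), K φ(t)⟩ is differentiable with H'(t) = ⟨μ(t), s⟩ − d ⟨μ(t), K μ(t)⟩ ≤ ⟨μ(t), s⟩ for all t; in particular, if s = 0 then H is nonincreasing. (Algebraic form of the energy dissipation law for the standard mixed continuous Galerkin semidiscretization of the Cahn–Hilliard equation: dH_CG/dt = −‖√d ∇μ_h‖² + ⟨μ_h, S⟩.) -/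

import Mathlib

open Matrix

lemma sym_dot {n : ℕ} {A : Matrix (Fin n) (Fin n) ℝ} (hA : A.IsSymm)
    (x y : Fin n → ℝ) : dotProduct x (A *ᵥ y) = dotProduct (A *ᵥ x) y := by
  rw [dotProduct_mulVec, ← mulVec_transpose, hA.eq]

lemma coord_deriv {n : ℕ} {φ : ℝ → Fin n → ℝ} (hφ : Differentiable ℝ φ)
    (t : ℝ) (i : Fin n) : HasDerivAt (fun τ => φ τ i) (deriv φ t i) t :=
  ((ContinuousLinearMap.proj (R := ℝ) (φ := fun _ : Fin n => ℝ) i).hasFDerivAt.comp_hasDerivAt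
    t (hφ t).hasDerivAt)

lemma quad_deriv {n : ℕ} {K : Matrix (Fin n) (Fin n) ℝ} {φ : ℝ → Fin n → ℝ}
    (hφ : Differentiable ℝ φ) (t : ℝ) :
    HasDerivAt (fun τ => dotProduct (φ τ) (K *ᵥ φ τ))
      (dotProduct (deriv φ t) (K *ᵥ φ t) + dotProduct (φ t) (K *ᵥ deriv φ t)) t := by
  have h : ∀ τ, dotProduct (φ τ) (K *ᵥ φ τ) = ∑ i, ∑ j, φ τ i * (K i j * φ τ j) := by
    intro τ; simp [dotProduct, mulVec, Finset.mul_sum]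
  have h' : dotProduct (deriv φ t) (K *ᵥ φ t) + dotProduct (φ t) (K *ᵥ deriv φ t)
      = ∑ i, ∑ j, (deriv φ t i * (K i j * φ t j) + φ t i * (K i j * deriv φ t j)) := by
    simp [dotProduct, mulVec, Finset.mul_sum, Finset.sum_add_distrib]
  rw [h']
  simp only [h]
  exact HasDerivAt.fun_sum fun i _ => HasDerivAt.fun_sum fun j _ => by
    have := (coord_deriv hφ t i).fun_mul (((coord_deriv hφ t j).const_mul (K i j)))
    simpa [mul_comm, mul_assoc, mul_left_comm] using this

lemma lin_dot {n : ℕ} (L : (Fin n → ℝ) →L[ℝ] ℝ) (x : Fin n → ℝ) :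
    L x = dotProduct (fun i => L (Pi.single i 1)) x := by
  have hx : x = ∑ i, x i • (Pi.single i (1:ℝ) : Fin n → ℝ) := by
    ext j; simp [Pi.single_apply, Finset.sum_apply]
  conv_lhs => rw [hx]
  simp [dotProduct, mul_comm]

theorem stmt_12 (n : ℕ) (M K : Matrix (Fin n) (Fin n) ℝ)
    (hM : M.IsSymm) (hK : K.PosSemidef) (ε : ℝ) (d : ℝ) (hd : 0 ≤ d)
    (s : Fin n → ℝ) (G : (Fin n → ℝ) → ℝ) (hG : Differentiable ℝ G)
    (φ : ℝ → Fin n → ℝ) (hφ : Differentiable ℝ φ) (μ : ℝ → Fin n → ℝ)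
    (h1 : ∀ t, M *ᵥ deriv φ t = s - d • (K *ᵥ μ t))
    (h2 : ∀ t, M *ᵥ μ t
      = (fun i => fderiv ℝ G (φ t) (Pi.single i 1)) + ε^2 • (K *ᵥ φ t)) :
    (∀ t : ℝ,
      HasDerivAt (fun τ => G (φ τ) + ε^2/2 * dotProduct (φ τ) (K *ᵥ φ τ))
        (dotProduct (μ t) s - d * dotProduct (μ t) (K *ᵥ μ t)) t
      ∧ dotProduct (μ t) s - d * dotProduct (μ t) (K *ᵥ μ t) ≤ dotProduct (μ t) s)
    ∧ (s = 0 →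
        Antitone (fun t => G (φ t) + ε^2/2 * dotProduct (φ t) (K *ᵥ φ t))) := by
  have hKs : K.IsSymm := by
    have := hK.1
    rwa [Matrix.IsHermitian, conjTranspose_eq_transpose_of_trivial] at this
  have hKnn : ∀ x : Fin n → ℝ, 0 ≤ dotProduct x (K *ᵥ x) := by
    intro x
    have := hK.re_dotProduct_nonneg x
    simpa using this
  have key : ∀ t, HasDerivAt (fun τ => G (φ τ) + ε^2/2 * dotProduct (φ τ) (K *ᵥ φ τ))
      (dotProduct (μ t) s - d * dotProduct (μ t) (K *ᵥ μ t)) t := by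
    intro t
    set ψ := deriv φ t with hψdef
    have hg : HasDerivAt (fun τ => G (φ τ)) (fderiv ℝ G (φ t) ψ) t :=
      (hG (φ t)).hasFDerivAt.comp_hasDerivAt t (hφ t).hasDerivAt
    have hq := ((quad_deriv (K := K) hφ t).const_mul (ε^2/2))
    have hsum := hg.add hq
    refine hsum.congr_deriv (Eq.symm ?_)
    have e1 : fderiv ℝ G (φ t) ψ = dotProduct (fun i => fderiv ℝ G (φ t) (Pi.single i 1)) ψ :=
      lin_dot _ ψ
    have e2 : dotProduct (φ t) (K *ᵥ ψ) = dotProduct ψ (K *ᵥ φ t) := by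
      rw [sym_dot hKs, dotProduct_comm]
    have e3 : dotProduct (μ t) (M *ᵥ ψ) = dotProduct (M *ᵥ μ t) ψ := sym_dot hM _ _
    have lhs_eq : dotProduct (μ t) s - d * dotProduct (μ t) (K *ᵥ μ t)
        = dotProduct (μ t) (M *ᵥ ψ) := by
      rw [h1 t]
      simp [dotProduct_sub, dotProduct_smul, smul_eq_mul, mul_comm]
    rw [lhs_eq, e3, h2 t, add_dotProduct, smul_dotProduct, e1, e2, smul_eq_mul,
      dotProduct_comm (K *ᵥ φ t) ψ, hψdef]
    ring
  constructor
  · intro t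
    refine ⟨key t, ?_⟩
    have := mul_nonneg hd (hKnn (μ t))
    linarith
  · intro hs
    apply antitone_of_deriv_nonpos
    · exact fun t => (key t).differentiableAt
    · intro t
      rw [(key t).deriv, hs]
      have := mul_nonneg hd (hKnn (μ t))
      simp only [dotProduct_zero]
      linarith
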